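/- Let G be a finite simple graph on n vertices, k ≥ 1 an integer, and m a natural number such that every set of k vertices of G spans at most m edges of G. Let H(G,k) be the associated graph of the reduction. Then for every set W of unordered pairs of distinct followers of H(G,k), disjoint from E(H(G,k)), and every k-element set K ⊆ V(G) such that every a_v with v ∈ K has degree at least n+k−1 in the graph H(G,k) ∪ W, it holds that |W| ≥ k(k−1) − m. -/

import Mathlib

/-- The degree of a vertex: the number of its neighbors. -/
noncomputable def deg {V : Type*} (G : SimpleGraph V) (v : V) : ℕ :=
  (G.neighborSet v).ncard

/-- The generating relation of the reduction graph `H(G,k)`: vertices are `a_v = Sum.inl v`,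
`d_{v,ℓ} = Sum.inr (Sum.inl (v,ℓ))` and leaders `x_i = Sum.inr (Sum.inr i)`; `a_u ~ a_v`
iff `{u,v}` is a non-edge of `G`, the leaders form a clique, and `a_v ~ d_{v,ℓ}` for
`ℓ ∈ [deg_G(v)+1]`. -/
def hRel {V : Type*} (G : SimpleGraph V) (n k : ℕ) :
    (V ⊕ (V × Fin n) ⊕ Fin (n + k)) → (V ⊕ (V × Fin n) ⊕ Fin (n + k)) → Prop
  | Sum.inl u, Sum.inl v => ¬ G.Adj u v
  | Sum.inl v, Sum.inr (Sum.inl (w, ℓ)) => v = w ∧ (ℓ : ℕ) < deg G v + 1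
  | Sum.inr (Sum.inr _), Sum.inr (Sum.inr _) => True
  | _, _ => False

/-- The reduction graph `H(G,k)`. -/
def Hgraph {V : Type*} (G : SimpleGraph V) (n k : ℕ) :
    SimpleGraph (V ⊕ (V × Fin n) ⊕ Fin (n + k)) :=
  SimpleGraph.fromRel (hRel G n k)

/-- Followers of `H(G,k)`: every vertex except the leaders `x_i`. -/
def isFollowerH {V : Type*} {n k : ℕ} : (V ⊕ (V × Fin n) ⊕ Fin (n + k)) → Prop
  | Sum.inr (Sum.inr _) => False
  | _ => True

/-- Soundness of the Densest-k-Subgraph reduction: if every `k`-set of vertices of `G`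
spans at most `m` edges, then any set `W` of added non-edges between distinct followers
of `H(G,k)` that raises the degrees of all `a_v`, `v ∈ K` (`|K| = k`) to at least `n+k−1`
satisfies `|W| ≥ k(k−1) − m`. -/
theorem stmt_7 {V : Type*} [Fintype V] [DecidableEq V] (G : SimpleGraph V)
    (k : ℕ) (hk : 1 ≤ k) (n : ℕ) (hn : n = Fintype.card V) (m : ℕ)
    (hdense : ∀ K : Finset V, K.card = k →
      {e : Sym2 V | e ∈ G.edgeSet ∧ ∀ v ∈ e, v ∈ K}.ncard ≤ m)
    (W : Set (Sym2 (V ⊕ (V × Fin n) ⊕ Fin (n + k)))) (hWfin : W.Finite)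
    (hdiag : ∀ e ∈ W, ¬ e.IsDiag)
    (hfol : ∀ e ∈ W, ∀ z ∈ e, isFollowerH z)
    (hnew : ∀ e ∈ W, e ∉ (Hgraph G n k).edgeSet)
    (K : Finset V) (hKcard : K.card = k)
    (hdeg : ∀ v ∈ K,
      n + k - 1 ≤ deg (Hgraph G n k ⊔ SimpleGraph.fromEdgeSet W) (Sum.inl v)) :
    k * (k - 1) - m ≤ W.ncard := by
  classical
  obtain ⟨u₀, hu₀⟩ : K.Nonempty := Finset.card_pos.mp (by omega)
  -- degree of the reduction graph at a_v is at most n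
  have hHdeg : ∀ v : V, deg (Hgraph G n k) (Sum.inl v) ≤ n := by
    intro v
    set d := deg G v with hd
    set A : Set V := {u | u ≠ v ∧ ¬ G.Adj v u} with hA
    set B : Set (V × Fin n) := (fun ℓ => (v, ℓ)) '' {ℓ : Fin n | (ℓ : ℕ) < d + 1} with hB
    have hsub : (Hgraph G n k).neighborSet (Sum.inl v) ⊆
        (Sum.inl '' A) ∪ ((fun p => Sum.inr (Sum.inl p) :
          V × Fin n → V ⊕ (V × Fin n) ⊕ Fin (n + k)) '' B) := by
      rintro (u | ⟨w, ℓ⟩ | i) hy <;>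
        simp only [SimpleGraph.mem_neighborSet, Hgraph, SimpleGraph.fromRel_adj, hRel,
          ne_eq, or_false, false_or, and_false, or_self] at hy
      · left
        refine ⟨u, ⟨fun h => hy.1 (by rw [h]), fun h => ?_⟩, rfl⟩
        rcases hy.2 with h1 | h2
        · exact h1 h
        · exact h2 h.symm
      · right
        obtain ⟨hne, hvw, hℓ⟩ := hy
        refine ⟨(w, ℓ), ⟨ℓ, ?_, by rw [hvw]⟩, rfl⟩
        simpa [← hvw] using hℓ
    have hBcard : B.ncard ≤ d + 1 := by
      have h1 : B.ncard ≤ {ℓ : Fin n | (ℓ : ℕ) < d + 1}.ncard :=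
        Set.ncard_image_le (Set.toFinite _)
      have h2 : ({ℓ : Fin n | (ℓ : ℕ) < d + 1}).ncard =
          (Fin.val '' {ℓ : Fin n | (ℓ : ℕ) < d + 1}).ncard :=
        (Set.ncard_image_of_injective _ Fin.val_injective).symm
      have h3 : (Fin.val '' {ℓ : Fin n | (ℓ : ℕ) < d + 1}).ncard ≤ (Set.Iio (d + 1)).ncard := by
        apply Set.ncard_le_ncard _ (Set.finite_Iio _)
        rintro x ⟨ℓ, hℓ, rfl⟩
        exact hℓ
      have h4 : (Set.Iio (d + 1) : Set ℕ).ncard = d + 1 := by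
        rw [← Finset.coe_Iio, Set.ncard_coe_finset, Nat.card_Iio]
      omega
    have hAcard : A.ncard + (d + 1) ≤ n := by
      have hdisj1 : Disjoint ({v} : Set V) (G.neighborSet v) := by
        simp [Set.disjoint_left]
      have hdisj2 : Disjoint A ({v} ∪ G.neighborSet v) := by
        rw [Set.disjoint_union_right]
        constructor
        · rw [Set.disjoint_left]; rintro u ⟨h1, h2⟩ h3; exact h1 (by simpa using h3)
        · rw [Set.disjoint_left]; rintro u ⟨h1, h2⟩ h3; exact h2 h3
      have he1 : (A ∪ ({v} ∪ G.neighborSet v)).ncard = A.ncard + (1 + d) := by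
        rw [Set.ncard_union_eq hdisj2 (Set.toFinite _) (Set.toFinite _),
          Set.ncard_union_eq hdisj1 (Set.toFinite _) (Set.toFinite _), Set.ncard_singleton]
        rfl
      have he2 : (A ∪ ({v} ∪ G.neighborSet v)).ncard ≤ n := by
        have := Set.ncard_le_ncard (Set.subset_univ (A ∪ ({v} ∪ G.neighborSet v)))
          Set.finite_univ
        rwa [Set.ncard_univ, Nat.card_eq_fintype_card, ← hn] at this
      omega
    have hm : deg (Hgraph G n k) (Sum.inl v) ≤ A.ncard + B.ncard := by
      calc deg (Hgraph G n k) (Sum.inl v)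
          ≤ ((Sum.inl '' A) ∪ ((fun p => Sum.inr (Sum.inl p) :
            V × Fin n → V ⊕ (V × Fin n) ⊕ Fin (n + k)) '' B)).ncard :=
            Set.ncard_le_ncard hsub (Set.toFinite _)
        _ ≤ (Sum.inl '' A).ncard + ((fun p => Sum.inr (Sum.inl p) :
            V × Fin n → V ⊕ (V × Fin n) ⊕ Fin (n + k)) '' B).ncard :=
            Set.ncard_union_le _ _
        _ ≤ A.ncard + B.ncard := by
            gcongr <;> exact Set.ncard_image_le (Set.toFinite _)
    omega
  set Wf := hWfin.toFinset with hWf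
  set cnt : V → ℕ := fun v => (Wf.filter fun e => Sum.inl v ∈ e).card with hcntdef
  -- every v ∈ K has at least k-1 W-edges at a_v
  have hcnt : ∀ v ∈ K, k - 1 ≤ cnt v := by
    intro v hv
    set W' := SimpleGraph.fromEdgeSet W with hW'
    have h2 : (W'.neighborSet (Sum.inl v)).ncard ≤ cnt v := by
      have hinj : Set.InjOn (fun y => s(Sum.inl v, y)) (W'.neighborSet (Sum.inl v)) :=
        fun a _ b _ h => Sym2.congr_right.mp h
      have himg : (fun y => s(Sum.inl v, y)) '' W'.neighborSet (Sum.inl v) ⊆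
          ↑(Wf.filter fun e => Sum.inl v ∈ e) := by
        rintro e ⟨y, hy, rfl⟩
        simp only [SimpleGraph.mem_neighborSet, hW', SimpleGraph.fromEdgeSet_adj] at hy
        simp only [Finset.coe_filter, Set.mem_setOf_eq, hWf, Set.Finite.mem_toFinset]
        exact ⟨hy.1, Sym2.mem_mk_left _ _⟩
      calc (W'.neighborSet (Sum.inl v)).ncard
          = ((fun y => s(Sum.inl v, y)) '' W'.neighborSet (Sum.inl v)).ncard :=
            (Set.ncard_image_of_injOn hinj).symm
        _ ≤ (↑(Wf.filter fun e => Sum.inl v ∈ e) :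
            Set (Sym2 (V ⊕ (V × Fin n) ⊕ Fin (n + k)))).ncard :=
            Set.ncard_le_ncard himg (Set.toFinite _)
        _ = cnt v := Set.ncard_coe_finset _
    have h1 : deg (Hgraph G n k ⊔ W') (Sum.inl v) ≤
        deg (Hgraph G n k) (Sum.inl v) + (W'.neighborSet (Sum.inl v)).ncard := by
      have hsub : (Hgraph G n k ⊔ W').neighborSet (Sum.inl v) ⊆
          (Hgraph G n k).neighborSet (Sum.inl v) ∪ W'.neighborSet (Sum.inl v) := by
        intro y hy
        simp only [SimpleGraph.mem_neighborSet, SimpleGraph.sup_adj] at hy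
        simpa using hy
      calc deg (Hgraph G n k ⊔ W') (Sum.inl v)
          ≤ ((Hgraph G n k).neighborSet (Sum.inl v) ∪ W'.neighborSet (Sum.inl v)).ncard :=
            Set.ncard_le_ncard hsub (Set.toFinite _)
        _ ≤ _ := Set.ncard_union_le _ _
    have h0 := hdeg v hv
    have h3 := hHdeg v
    omega
  set c : Sym2 (V ⊕ (V × Fin n) ⊕ Fin (n + k)) → ℕ :=
    fun e => (K.filter fun v => Sum.inl v ∈ e).card with hcdef
  have hswap : ∑ v ∈ K, cnt v = ∑ e ∈ Wf, c e := by
    simp only [hcntdef, hcdef, Finset.card_filter]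
    exact Finset.sum_comm
  have hc2 : ∀ e, c e ≤ 2 := by
    intro e
    induction e with
    | _ x y =>
      have hsub : (K.filter fun v => Sum.inl v ∈ s(x, y)) ⊆
          (Finset.univ.filter fun v : V => Sum.inl v = x) ∪
          (Finset.univ.filter fun v : V => Sum.inl v = y) := by
        intro v hv
        simp only [Finset.mem_filter, Sym2.mem_iff] at hv
        simp only [Finset.mem_union, Finset.mem_filter, Finset.mem_univ, true_and]
        exact hv.2
      have hle : ∀ z : V ⊕ (V × Fin n) ⊕ Fin (n + k),
          (Finset.univ.filter fun v : V => Sum.inl v = z).card ≤ 1 := by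
        intro z
        apply Finset.card_le_one.mpr
        intro a ha b hb
        simp only [Finset.mem_filter] at ha hb
        exact Sum.inl_injective (ha.2.trans hb.2.symm)
      calc c s(x, y) ≤ _ := Finset.card_le_card hsub
        _ ≤ _ + _ := Finset.card_union_le _ _
        _ ≤ 2 := by have := hle x; have := hle y; omega
  set bad := Wf.filter fun e => 2 ≤ c e with hbad
  -- structure of doubly-counted edges
  have hbadstruct : ∀ e ∈ bad, ∃ u v, u ∈ K ∧ v ∈ K ∧ u ≠ v ∧
      e = s(Sum.inl u, Sum.inl v) ∧ G.Adj u v := by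
    intro e he
    simp only [hbad, Finset.mem_filter] at he
    obtain ⟨heW, hce⟩ := he
    obtain ⟨u, hu, v, hv, huv⟩ := Finset.one_lt_card.mp (by omega : 1 < c e)
    simp only [Finset.mem_filter] at hu hv
    have hne : (Sum.inl u : V ⊕ (V × Fin n) ⊕ Fin (n + k)) ≠ Sum.inl v :=
      fun h => huv (Sum.inl_injective h)
    have heq : e = s(Sum.inl u, Sum.inl v) :=
      (Sym2.mem_and_mem_iff hne).mp ⟨hu.2, hv.2⟩
    have heW' : e ∈ W := (Set.Finite.mem_toFinset hWfin).mp heW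
    have hnotH := hnew e heW'
    rw [heq, SimpleGraph.mem_edgeSet] at hnotH
    simp only [Hgraph, SimpleGraph.fromRel_adj, hRel] at hnotH
    push_neg at hnotH
    have hadj : G.Adj u v := (hnotH hne).1
    exact ⟨u, v, hu.1, hv.1, huv, heq, hadj⟩
  -- at most m doubly-counted edges
  have hbadcard : bad.card ≤ m := by
    set S : Set (Sym2 V) := {e : Sym2 V | e ∈ G.edgeSet ∧ ∀ v ∈ e, v ∈ K} with hS
    have hSfin : S.Finite := Set.toFinite _
    have hSm : hSfin.toFinset.card ≤ m := by
      rw [← Set.ncard_eq_toFinset_card _ hSfin]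
      exact hdense K hKcard
    set r : (V ⊕ (V × Fin n) ⊕ Fin (n + k)) → V := Sum.elim id (fun _ => u₀) with hr
    have hback : ∀ e ∈ bad, Sym2.map Sum.inl (Sym2.map r e) = e := by
      intro e he
      obtain ⟨u, v, _, _, _, heq, _⟩ := hbadstruct e he
      simp [heq, hr]
    have := Finset.card_le_card_of_injOn (Sym2.map r)
      (t := hSfin.toFinset) ?_ ?_ (s := bad)
    · omega
    · intro e he
      obtain ⟨u, v, hu, hv, huv, heq, hadj⟩ := hbadstruct e he
      simp only [Finset.mem_coe, Set.Finite.mem_toFinset, hS, Set.mem_setOf_eq]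
      rw [heq]
      simp only [Sym2.map_pair_eq, hr, Sum.elim_inl, id_eq]
      refine ⟨SimpleGraph.mem_edgeSet _ |>.mpr hadj, ?_⟩
      intro w hw
      rcases Sym2.mem_iff.mp hw with h | h <;> subst h <;> assumption
    · intro e1 he1 e2 he2 h
      have := hback e1 he1
      rw [← hback e1 he1, ← hback e2 he2, h]
  -- putting it together
  have hsum2 : ∑ e ∈ Wf, c e ≤ Wf.card + bad.card := by
    have hpt : ∀ e ∈ Wf, c e ≤ 1 + (if 2 ≤ c e then 1 else 0) := by
      intro e _
      have := hc2 e
      split_ifs <;> omega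
    calc ∑ e ∈ Wf, c e ≤ ∑ e ∈ Wf, (1 + if 2 ≤ c e then 1 else 0) :=
          Finset.sum_le_sum hpt
      _ = Wf.card + bad.card := by
          rw [Finset.sum_add_distrib, Finset.sum_const, smul_eq_mul, mul_one, hbad,
            Finset.card_filter]
  have hsum1 : k * (k - 1) ≤ ∑ v ∈ K, cnt v := by
    calc k * (k - 1) = ∑ _v ∈ K, (k - 1) := by
          rw [Finset.sum_const, hKcard, smul_eq_mul]
      _ ≤ ∑ v ∈ K, cnt v := Finset.sum_le_sum hcnt
  have hWcard : W.ncard = Wf.card := Set.ncard_eq_toFinset_card _ hWfin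
  omega
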